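/- There exists a sequence (a_n)_{n≥0} with a_n ∈ {0,1} for all n such that the sequence of arithmetic means (a*_n)_{n≥0} converges to 0, yet for every p ∈ (0,1) the sequence of p-binomial means (a^p_n)_{n≥0} does not converge. -/

import Mathlib

open Filter Finset

/-- The `p`-binomial mean of a sequence. -/
noncomputable def binMean (p : ℝ) (a : ℕ → ℝ) (n : ℕ) : ℝ :=
  ∑ i ∈ Finset.range (n + 1), (n.choose i : ℝ) * p ^ i * (1 - p) ^ (n - i) * a i

/-- The arithmetic (Cesàro) mean of a sequence. -/
noncomputable def cesaroMean (a : ℕ → ℝ) (n : ℕ) : ℝ :=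
  (1 / (n + 1 : ℝ)) * ∑ i ∈ Finset.range (n + 1), a i

section Aux

lemma m0 (p : ℝ) (n : ℕ) :
    ∑ i ∈ range (n + 1), (n.choose i : ℝ) * p ^ i * (1 - p) ^ (n - i) = 1 := by
  have h := add_pow p (1 - p) n
  simp only [add_sub_cancel, one_pow] at h
  have h2 : ∑ i ∈ range (n + 1), (n.choose i : ℝ) * p ^ i * (1 - p) ^ (n - i)
      = ∑ i ∈ range (n + 1), p ^ i * (1 - p) ^ (n - i) * (n.choose i : ℝ) :=
    Finset.sum_congr rfl fun i _ => by ring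
  rw [h2, ← h]

lemma m1 (p : ℝ) (n : ℕ) :
    ∑ i ∈ range (n + 1), (i : ℝ) * ((n.choose i : ℝ) * p ^ i * (1 - p) ^ (n - i)) = n * p := by
  cases n with
  | zero => simp
  | succ m =>
    rw [Finset.sum_range_succ']
    push_cast
    have key : ∀ j ∈ range (m + 1),
        ((j:ℝ)+1) * (((m+1).choose (j+1) : ℝ) * p ^ (j+1) * (1 - p) ^ (m - j))
        = ((m:ℝ)+1) * p * ((m.choose j : ℝ) * p ^ j * (1 - p) ^ (m - j)) := by
      intro j hj
      have h := Nat.add_one_mul_choose_eq m j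
      have hc : ((m:ℝ)+1) * (m.choose j : ℝ) = ((m+1).choose (j+1) : ℝ) * ((j:ℝ)+1) := by
        exact_mod_cast congrArg (Nat.cast (R := ℝ)) h
      linear_combination (-(p ^ (j+1) * (1 - p) ^ (m - j))) * hc
    rw [Finset.sum_congr rfl key, ← Finset.mul_sum, m0 p m]
    ring

lemma m2 (p : ℝ) (n : ℕ) :
    ∑ i ∈ range (n + 1), (i : ℝ) * ((i:ℝ) - 1) * ((n.choose i : ℝ) * p ^ i * (1 - p) ^ (n - i))
      = n * (n - 1) * p ^ 2 := by
  cases n with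
  | zero => simp
  | succ m =>
    rw [Finset.sum_range_succ']
    push_cast
    have key : ∀ j ∈ range (m + 1),
        ((j:ℝ)+1) * (((j:ℝ)+1) - 1) * (((m+1).choose (j+1) : ℝ) * p ^ (j+1) * (1 - p) ^ (m - j))
        = ((m:ℝ)+1) * p * ((j:ℝ) * ((m.choose j : ℝ) * p ^ j * (1 - p) ^ (m - j))) := by
      intro j hj
      have h := Nat.add_one_mul_choose_eq m j
      have hc : ((m:ℝ)+1) * (m.choose j : ℝ) = ((m+1).choose (j+1) : ℝ) * ((j:ℝ)+1) := by
        exact_mod_cast congrArg (Nat.cast (R := ℝ)) h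
      linear_combination (-((j:ℝ) * p ^ (j+1) * (1 - p) ^ (m - j))) * hc
    rw [Finset.sum_congr rfl key, ← Finset.mul_sum, m1 p m]
    ring

lemma var (p : ℝ) (n : ℕ) :
    ∑ i ∈ range (n + 1), ((i:ℝ) - n * p) ^ 2 * ((n.choose i : ℝ) * p ^ i * (1 - p) ^ (n - i))
      = n * p * (1 - p) := by
  have e : ∀ i ∈ range (n+1),
      ((i:ℝ) - n * p) ^ 2 * ((n.choose i : ℝ) * p ^ i * (1 - p) ^ (n - i))
      = (i : ℝ) * ((i:ℝ) - 1) * ((n.choose i : ℝ) * p ^ i * (1 - p) ^ (n - i))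
        + (1 - 2 * n * p) * ((i : ℝ) * ((n.choose i : ℝ) * p ^ i * (1 - p) ^ (n - i)))
        + (n:ℝ)^2 * p^2 * ((n.choose i : ℝ) * p ^ i * (1 - p) ^ (n - i)) := by
    intro i _; ring
  rw [Finset.sum_congr rfl e, Finset.sum_add_distrib, Finset.sum_add_distrib,
    ← Finset.mul_sum, ← Finset.mul_sum, m0, m1, m2]
  ring


lemma w_nonneg {p : ℝ} (hp0 : 0 < p) (hp1 : p < 1) (n i : ℕ) :
    0 ≤ (n.choose i : ℝ) * p ^ i * (1 - p) ^ (n - i) := by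
  have : (0:ℝ) ≤ 1 - p := by linarith
  positivity

lemma pq_le {p : ℝ} : p * (1 - p) ≤ 1/4 := by nlinarith [sq_nonneg (2*p - 1)]

lemma tail_le {p : ℝ} (hp0 : 0 < p) (hp1 : p < 1) {n : ℕ} (hn : 1 ≤ n) :
    ∑ i ∈ (range (n + 1)).filter (fun i : ℕ => ¬ ((i:ℝ) - n * p) ^ 2 < n),
      (n.choose i : ℝ) * p ^ i * (1 - p) ^ (n - i) ≤ 1/4 := by
  have hnpos : (0:ℝ) < n := by exact_mod_cast hn
  have step1 : ∑ i ∈ (range (n + 1)).filter (fun i : ℕ => ¬ ((i:ℝ) - n * p) ^ 2 < n),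
      (n.choose i : ℝ) * p ^ i * (1 - p) ^ (n - i)
      ≤ ∑ i ∈ (range (n + 1)).filter (fun i : ℕ => ¬ ((i:ℝ) - n * p) ^ 2 < n),
        (((i:ℝ) - n * p) ^ 2 / n) * ((n.choose i : ℝ) * p ^ i * (1 - p) ^ (n - i)) := by
    apply Finset.sum_le_sum
    intro i hi
    rw [Finset.mem_filter] at hi
    have h2 : (n:ℝ) ≤ ((i:ℝ) - n * p) ^ 2 := not_lt.mp hi.2
    have hw := w_nonneg hp0 hp1 n i
    have h3 : 1 ≤ ((i:ℝ) - n * p) ^ 2 / n := (one_le_div hnpos).mpr h2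
    nlinarith [mul_le_mul_of_nonneg_right h3 hw]
  have step2 : ∑ i ∈ (range (n + 1)).filter (fun i : ℕ => ¬ ((i:ℝ) - n * p) ^ 2 < n),
      (((i:ℝ) - n * p) ^ 2 / n) * ((n.choose i : ℝ) * p ^ i * (1 - p) ^ (n - i))
      ≤ ∑ i ∈ range (n + 1),
        (((i:ℝ) - n * p) ^ 2 / n) * ((n.choose i : ℝ) * p ^ i * (1 - p) ^ (n - i)) := by
    apply Finset.sum_le_sum_of_subset_of_nonneg (Finset.filter_subset _ _)
    intro i _ _
    have hw := w_nonneg hp0 hp1 n i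
    positivity
  have step3 : ∑ i ∈ range (n + 1),
      (((i:ℝ) - n * p) ^ 2 / n) * ((n.choose i : ℝ) * p ^ i * (1 - p) ^ (n - i))
      = p * (1 - p) := by
    have : ∀ i ∈ range (n+1), (((i:ℝ) - n * p) ^ 2 / n) * ((n.choose i : ℝ) * p ^ i * (1 - p) ^ (n - i))
        = (1/n) * (((i:ℝ) - n * p) ^ 2 * ((n.choose i : ℝ) * p ^ i * (1 - p) ^ (n - i))) := by
      intro i _; ring
    rw [Finset.sum_congr rfl this, ← Finset.mul_sum, var]
    field_simp
  linarith [pq_le (p := p), step1, step2, step3.le, step3.ge]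

lemma binMean_le_quarter {p : ℝ} (hp0 : 0 < p) (hp1 : p < 1) {a : ℕ → ℝ}
    (ha : ∀ i, a i = 0 ∨ a i = 1) {n : ℕ} (hn : 1 ≤ n)
    (h : ∀ i ≤ n, a i = 1 → (n:ℝ) ≤ ((i:ℝ) - n * p) ^ 2) :
    binMean p a n ≤ 1/4 := by
  have step : binMean p a n ≤ ∑ i ∈ (range (n + 1)).filter (fun i : ℕ => ¬ ((i:ℝ) - n * p) ^ 2 < n),
      (n.choose i : ℝ) * p ^ i * (1 - p) ^ (n - i) := by
    rw [binMean, ← Finset.sum_filter_add_sum_filter_not (range (n+1))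
      (fun i : ℕ => ¬ ((i:ℝ) - n * p) ^ 2 < n) (fun i => (n.choose i : ℝ) * p ^ i * (1 - p) ^ (n - i) * a i)]
    have h1 : ∑ i ∈ (range (n + 1)).filter (fun i : ℕ => ¬ ((i:ℝ) - n * p) ^ 2 < n),
        (n.choose i : ℝ) * p ^ i * (1 - p) ^ (n - i) * a i
        ≤ ∑ i ∈ (range (n + 1)).filter (fun i : ℕ => ¬ ((i:ℝ) - n * p) ^ 2 < n),
        (n.choose i : ℝ) * p ^ i * (1 - p) ^ (n - i) := by
      apply Finset.sum_le_sum
      intro i hi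
      have hw := w_nonneg hp0 hp1 n i
      rcases ha i with h0 | h1
      · rw [h0, mul_zero]; exact hw
      · rw [h1, mul_one]
    have h2 : ∑ i ∈ (range (n + 1)).filter (fun i : ℕ => ¬ (¬ ((i:ℝ) - n * p) ^ 2 < n)),
        (n.choose i : ℝ) * p ^ i * (1 - p) ^ (n - i) * a i = 0 := by
      apply Finset.sum_eq_zero
      intro i hi
      rw [Finset.mem_filter, Finset.mem_range, not_not] at hi
      rcases ha i with h0 | h1
      · rw [h0, mul_zero]
      · exact absurd (h i (by omega) h1) (not_le.mpr hi.2)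
    linarith
  linarith [tail_le hp0 hp1 hn, step]

lemma binMean_ge_three_quarter {p : ℝ} (hp0 : 0 < p) (hp1 : p < 1) {a : ℕ → ℝ}
    (ha : ∀ i, a i = 0 ∨ a i = 1) {n : ℕ} (hn : 1 ≤ n)
    (h : ∀ i ≤ n, ((i:ℝ) - n * p) ^ 2 < n → a i = 1) :
    3/4 ≤ binMean p a n := by
  have key := Finset.sum_filter_add_sum_filter_not (range (n+1))
      (fun i : ℕ => ¬ ((i:ℝ) - n * p) ^ 2 < n) (fun i => (n.choose i : ℝ) * p ^ i * (1 - p) ^ (n - i))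
  rw [m0 p n] at key
  have h1 : ∑ i ∈ (range (n + 1)).filter (fun i : ℕ => ¬ (¬ ((i:ℝ) - n * p) ^ 2 < n)),
      (n.choose i : ℝ) * p ^ i * (1 - p) ^ (n - i) ≤ binMean p a n := by
    rw [binMean, ← Finset.sum_filter_add_sum_filter_not (range (n+1))
      (fun i : ℕ => ¬ (¬ ((i:ℝ) - n * p) ^ 2 < n)) (fun i => (n.choose i : ℝ) * p ^ i * (1 - p) ^ (n - i) * a i)]
    have e1 : ∑ i ∈ (range (n + 1)).filter (fun i : ℕ => ¬ (¬ ((i:ℝ) - n * p) ^ 2 < n)),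
        (n.choose i : ℝ) * p ^ i * (1 - p) ^ (n - i) * a i
        = ∑ i ∈ (range (n + 1)).filter (fun i : ℕ => ¬ (¬ ((i:ℝ) - n * p) ^ 2 < n)),
        (n.choose i : ℝ) * p ^ i * (1 - p) ^ (n - i) := by
      apply Finset.sum_congr rfl
      intro i hi
      rw [Finset.mem_filter, Finset.mem_range, not_not] at hi
      rw [h i (by omega) hi.2, mul_one]
    have e2 : 0 ≤ ∑ i ∈ (range (n + 1)).filter (fun i : ℕ => ¬ (¬ (¬ ((i:ℝ) - n * p) ^ 2 < n))),
        (n.choose i : ℝ) * p ^ i * (1 - p) ^ (n - i) * a i := by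
      apply Finset.sum_nonneg
      intro i hi
      have hw := w_nonneg hp0 hp1 n i
      rcases ha i with h0 | h1
      · rw [h0, mul_zero]
      · rw [h1, mul_one]; exact hw
    linarith
  linarith [tail_le hp0 hp1 hn, h1, key]

def Mf : ℕ → ℕ := fun k => 2 ^ (4 ^ k)

lemma k_lt_four_pow (k : ℕ) : k + 1 ≤ 4 ^ k := by have := Nat.lt_pow_self (n := k) (show 1 < 4 by norm_num); omega

lemma Mf_ge (k : ℕ) : 2 * (k + 1) ≤ Mf k := by
  have h1 : k + 1 ≤ 4 ^ k := k_lt_four_pow k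
  have h2 : 2 ^ (k + 1) ≤ 2 ^ (4 ^ k) := Nat.pow_le_pow_right (by norm_num) h1
  have h3 : 2 * (k + 1) ≤ 2 ^ (k + 1) := by
    have := Nat.lt_two_pow_self (n := k)
    calc 2 * (k+1) ≤ 2 * 2 ^ k := by omega
    _ = 2 ^ (k+1) := by ring
  exact h3.trans h2

lemma Mf_two (k : ℕ) : 2 ≤ Mf k := le_trans (by omega) (Mf_ge k)

lemma Mf_mono : Monotone Mf := fun i j hij =>
  Nat.pow_le_pow_right (by norm_num) (Nat.pow_le_pow_right (by norm_num) hij)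

lemma Mf_succ (k : ℕ) : Mf (k + 1) = Mf k ^ 4 := by
  simp only [Mf, ← pow_mul]
  rw [pow_succ]

lemma two_mul_le_four_pow (j : ℕ) : 2 * j ≤ 4 ^ j := by
  induction j with
  | zero => norm_num
  | succ m ih =>
    have : 1 ≤ 4 ^ m := Nat.one_le_pow _ _ (by norm_num)
    have h4 : 4 ^ (m + 1) = 4 * 4 ^ m := by ring
    omega

lemma sq_le_Mf (j : ℕ) : j ^ 2 ≤ Mf j := by
  have h1 : j ^ 2 ≤ 2 ^ (2 * j) := by
    have := (Nat.lt_two_pow_self (n := j)).le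
    calc j ^ 2 ≤ (2 ^ j) ^ 2 := Nat.pow_le_pow_left this 2
    _ = 2 ^ (2 * j) := by rw [← pow_mul, Nat.mul_comm]
  exact h1.trans (Nat.pow_le_pow_right (by norm_num) (two_mul_le_four_pow j))

lemma four_pow_le_Mf_sq (j : ℕ) : 4 ^ (j + 1) ≤ Mf j ^ 2 := by
  have h1 : j + 1 ≤ 4 ^ j := k_lt_four_pow j
  calc 4 ^ (j+1) = 2 ^ (2 * (j+1)) := by rw [pow_mul]; norm_num
  _ ≤ 2 ^ (2 * 4 ^ j) := Nat.pow_le_pow_right (by norm_num) (by omega)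
  _ = Mf j ^ 2 := by rw [Mf, ← pow_mul, Nat.mul_comm]


open scoped Classical in
noncomputable def aSeq : ℕ → ℝ := fun n =>
  if ∃ k, Mf k ^ 2 ≤ n ∧ n < Mf k ^ 2 + k * Mf k then 1 else 0

lemma aSeq_01 (n : ℕ) : aSeq n = 0 ∨ aSeq n = 1 := by
  unfold aSeq; split <;> simp

lemma aSeq_eq_one {n k : ℕ} (h1 : Mf k ^ 2 ≤ n) (h2 : n < Mf k ^ 2 + k * Mf k) :
    aSeq n = 1 := by
  unfold aSeq; rw [if_pos ⟨k, h1, h2⟩]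

lemma aSeq_one_elim {n : ℕ} (h : aSeq n = 1) :
    ∃ k, Mf k ^ 2 ≤ n ∧ n < Mf k ^ 2 + k * Mf k := by
  by_contra hne
  unfold aSeq at h
  rw [if_neg hne] at h
  norm_num at h

set_option maxHeartbeats 1000000 in
lemma partA' {p : ℝ} (hp0 : 0 < p) (hp1 : p < 1) {k N : ℕ}
    (hm2N : 2 * (k + 1) ≤ N) (hk : 48 ≤ (k : ℝ) * p) :
    ∃ n : ℕ, k ≤ n ∧ 1 ≤ n ∧
      ∀ i ≤ n, ((i : ℝ) - n * p) ^ 2 < n → (N ^ 2 ≤ i ∧ i < N ^ 2 + k * N) := by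
  have h2p : (0:ℝ) < 2 * p := by positivity
  have hm2 : (2:ℝ) ≤ N := by
    have : 2 ≤ N := by omega
    exact_mod_cast this
  have hN0 : (0:ℝ) ≤ (N:ℝ) := by linarith
  have hm2k : 2 * ((k:ℝ) + 1) ≤ (N:ℝ) := by exact_mod_cast hm2N
  have hK0 : (0:ℝ) ≤ (k:ℝ) := Nat.cast_nonneg k
  have hK : (48:ℝ) ≤ (k:ℝ) := le_trans hk (by nlinarith)
  set n := Nat.ceil (((2 * N ^ 2 + k * N : ℕ) : ℝ) / (2 * p)) with hndef
  have hCcast : ((2 * N ^ 2 + k * N : ℕ) : ℝ) = 2 * (N:ℝ) ^ 2 + (k:ℝ) * N := by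
    push_cast; ring
  have hnl : 2 * (N:ℝ) ^ 2 + (k:ℝ) * N ≤ (n : ℝ) * (2 * p) := by
    rw [← hCcast]
    exact (div_le_iff₀ h2p).mp (Nat.le_ceil _)
  have hnu : ((n : ℝ) - 1) * (2 * p) < 2 * (N:ℝ) ^ 2 + (k:ℝ) * N := by
    rw [← hCcast]
    refine (lt_div_iff₀ h2p).mp ?_
    have := Nat.ceil_lt_add_one (R := ℝ)
      (show (0:ℝ) ≤ ((2 * N ^ 2 + k * N : ℕ) : ℝ) / (2 * p) by positivity)
    linarith [this]
  have hnpl : (N:ℝ) ^ 2 + (k:ℝ) * N / 2 ≤ (n : ℝ) * p := by linarith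
  have hnpu : p * (n : ℝ) < (N:ℝ) ^ 2 + (k:ℝ) * N / 2 + p := by nlinarith
  have hnn : (0:ℝ) ≤ (n:ℝ) := Nat.cast_nonneg n
  have hkn : k ≤ n := by
    have h1 : (k:ℝ) ≤ (n : ℝ) := by nlinarith
    exact_mod_cast h1
  have h1n : 1 ≤ n := by
    have h1 : (1:ℝ) ≤ (n : ℝ) := by nlinarith
    exact_mod_cast h1
  -- common bounds
  have hkN2pos : (0:ℝ) < (k:ℝ) * (N:ℝ) ^ 2 := by nlinarith
  have c1 : (N:ℝ)^2 ≤ (k:ℝ) * (N:ℝ)^2 := le_mul_of_one_le_left (by positivity) (by linarith)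
  have c2 : (k:ℝ) * N / 2 ≤ (k:ℝ) * (N:ℝ)^2 := by
    nlinarith [mul_nonneg (mul_nonneg hK0 hN0) (show (0:ℝ) ≤ (N:ℝ) - 1/2 by linarith)]
  have c3 : p ≤ (k:ℝ) * (N:ℝ)^2 := by nlinarith
  have e4 : (N:ℝ)^2 + (k:ℝ) * N / 2 + p ≤ 3 * ((k:ℝ) * (N:ℝ)^2) := by linarith
  have h48 : 48 * ((k:ℝ) * (N:ℝ) ^ 2) ≤ ((k:ℝ) * p) * ((k:ℝ) * (N:ℝ) ^ 2) :=
    mul_le_mul_of_nonneg_right hk (by positivity)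
  have h48' : 48 * ((k:ℝ) * (N:ℝ) ^ 2) ≤ p * (k:ℝ)^2 * (N:ℝ)^2 := by linear_combination h48
  refine ⟨n, hkn, h1n, ?_⟩
  intro i hi hsq
  have hi0 : (0:ℝ) ≤ (i:ℝ) := Nat.cast_nonneg i
  constructor
  · by_contra hc
    push_neg at hc
    have hic : (i : ℝ) + 1 ≤ (N:ℝ) ^ 2 := by exact_mod_cast hc
    have h1 : (k:ℝ) * N / 2 + 1 ≤ (n : ℝ) * p - i := by linarith
    have h2 : ((k:ℝ) * N / 2 + 1) ^ 2 ≤ ((n : ℝ) * p - i) ^ 2 :=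
      pow_le_pow_left₀ (by positivity) h1 2
    have h4 : ((k:ℝ) * N / 2 + 1) ^ 2 < (n:ℝ) := by nlinarith
    have h5 : p * ((k:ℝ) * N / 2 + 1) ^ 2 < p * n := mul_lt_mul_of_pos_left h4 hp0
    have e1 : p * ((k:ℝ) * N / 2 + 1) ^ 2 < (N:ℝ)^2 + (k:ℝ) * N / 2 + p := h5.trans hnpu
    have e2 : p * ((k:ℝ) * N / 2 + 1) ^ 2
        = p * (k:ℝ)^2 * (N:ℝ)^2 / 4 + p * ((k:ℝ) * N) + p := by ring
    have c4 : (0:ℝ) ≤ p * ((k:ℝ) * N) := by positivity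
    linarith [e1, e2.ge, e2.le, h48', e4, c4, hkN2pos]
  · by_contra hc
    push_neg at hc
    have hic : (N:ℝ) ^ 2 + (k:ℝ) * N ≤ (i : ℝ) := by exact_mod_cast hc
    have hKm : 96 ≤ (k:ℝ) * N := by nlinarith
    have h1 : (k:ℝ) * N / 4 ≤ (i:ℝ) - (n : ℝ) * p := by nlinarith
    have h2 : ((k:ℝ) * N / 4) ^ 2 ≤ ((i:ℝ) - (n : ℝ) * p) ^ 2 :=
      pow_le_pow_left₀ (by positivity) h1 2
    have h4 : ((k:ℝ) * N / 4) ^ 2 < (n:ℝ) := by nlinarith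
    have h5 : p * ((k:ℝ) * N / 4) ^ 2 < p * n := mul_lt_mul_of_pos_left h4 hp0
    have e1 : p * ((k:ℝ) * N / 4) ^ 2 < (N:ℝ)^2 + (k:ℝ) * N / 2 + p := h5.trans hnpu
    have e2 : p * ((k:ℝ) * N / 4) ^ 2 = p * (k:ℝ)^2 * (N:ℝ)^2 / 16 := by ring
    linarith [e1, e2.ge, e2.le, h48', e4, hkN2pos]

lemma partA {p : ℝ} (hp0 : 0 < p) (hp1 : p < 1) {k : ℕ} (hk : 48 ≤ (k : ℝ) * p) :
    ∃ n : ℕ, k ≤ n ∧ 1 ≤ n ∧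
      ∀ i ≤ n, ((i : ℝ) - n * p) ^ 2 < n → aSeq i = 1 := by
  obtain ⟨n, h1, h2, h3⟩ := partA' hp0 hp1 (Mf_ge k) hk
  exact ⟨n, h1, h2, fun i hi hsq => aSeq_eq_one (h3 i hi hsq).1 (h3 i hi hsq).2⟩

set_option maxHeartbeats 1000000 in
lemma partB {p : ℝ} (hp0 : 0 < p) (hp1 : p < 1) {k : ℕ} (hk : 48 ≤ (k : ℝ) * p) :
    ∃ n : ℕ, k ≤ n ∧ 1 ≤ n ∧
      ∀ i ≤ n, aSeq i = 1 → (n : ℝ) ≤ ((i : ℝ) - n * p) ^ 2 := by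
  have hm2N := Mf_ge k
  set N := Mf k with hNdef
  have h2p : (0:ℝ) < 2 * p := by positivity
  have hm2 : (2:ℝ) ≤ N := by
    have : 2 ≤ N := by omega
    exact_mod_cast this
  have hN0 : (0:ℝ) ≤ (N:ℝ) := by linarith
  have hm2k : 2 * ((k:ℝ) + 1) ≤ (N:ℝ) := by exact_mod_cast hm2N
  have hK0 : (0:ℝ) ≤ (k:ℝ) := Nat.cast_nonneg k
  have hK : (48:ℝ) ≤ (k:ℝ) := le_trans hk (by nlinarith)
  have hpm : 96 ≤ p * (N:ℝ) := by nlinarith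
  set n := Nat.ceil (((4 * N ^ 2 : ℕ) : ℝ) / (2 * p)) with hndef
  have hCcast : ((4 * N ^ 2 : ℕ) : ℝ) = 4 * (N:ℝ) ^ 2 := by push_cast; ring
  have hnl : 4 * (N:ℝ) ^ 2 ≤ (n : ℝ) * (2 * p) := by
    rw [← hCcast]
    exact (div_le_iff₀ h2p).mp (Nat.le_ceil _)
  have hnu : ((n : ℝ) - 1) * (2 * p) < 4 * (N:ℝ) ^ 2 := by
    rw [← hCcast]
    refine (lt_div_iff₀ h2p).mp ?_
    have := Nat.ceil_lt_add_one (R := ℝ)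
      (show (0:ℝ) ≤ ((4 * N ^ 2 : ℕ) : ℝ) / (2 * p) by positivity)
    linarith [this]
  have hnpl : 2 * (N:ℝ) ^ 2 ≤ (n : ℝ) * p := by linarith
  have hnpu : p * (n : ℝ) < 2 * (N:ℝ) ^ 2 + p := by nlinarith
  have hnn : (0:ℝ) ≤ (n:ℝ) := Nat.cast_nonneg n
  have hkn : k ≤ n := by
    have h1 : (k:ℝ) ≤ (n : ℝ) := by nlinarith
    exact_mod_cast h1
  have h1n : 1 ≤ n := by
    have h1 : (1:ℝ) ≤ (n : ℝ) := by nlinarith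
    exact_mod_cast h1
  refine ⟨n, hkn, h1n, ?_⟩
  intro i hi hone
  obtain ⟨j, hj1, hj2⟩ := aSeq_one_elim hone
  have hi0 : (0:ℝ) ≤ (i:ℝ) := Nat.cast_nonneg i
  by_cases hjk : j ≤ k
  · have hup : i < N ^ 2 + k * N := by
      have h1 : Mf j ^ 2 + j * Mf j ≤ N ^ 2 + k * N :=
        Nat.add_le_add (Nat.pow_le_pow_left (Mf_mono hjk) 2)
          (Nat.mul_le_mul hjk (Mf_mono hjk))
      omega
    have hic : (i : ℝ) < (N:ℝ) ^ 2 + (k:ℝ) * N := by exact_mod_cast hup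
    have hKm : (k:ℝ) * N ≤ (N:ℝ) ^ 2 / 2 := by
      nlinarith [mul_nonneg hN0 (show (0:ℝ) ≤ (N:ℝ)/2 - 1 - (k:ℝ) by linarith)]
    have h1 : (N:ℝ) ^ 2 / 2 ≤ (n : ℝ) * p - i := by linarith
    have h2 : ((N:ℝ) ^ 2 / 2) ^ 2 ≤ ((n : ℝ) * p - i) ^ 2 :=
      pow_le_pow_left₀ (by positivity) h1 2
    have h96 : 96 * (N:ℝ) ^ 3 ≤ p * (N:ℝ) ^ 4 := by
      have := mul_le_mul_of_nonneg_right hpm (show (0:ℝ) ≤ (N:ℝ)^3 by positivity)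
      linear_combination this
    have hm3 : (N:ℝ)^2 ≤ (N:ℝ)^3 := by nlinarith
    have h3 : (n : ℝ) ≤ ((N:ℝ) ^ 2 / 2) ^ 2 := by
      by_contra hc
      push_neg at hc
      have h5 : p * (((N:ℝ) ^ 2 / 2) ^ 2) < p * n := mul_lt_mul_of_pos_left hc hp0
      have e2 : p * (((N:ℝ) ^ 2 / 2) ^ 2) = p * (N:ℝ)^4 / 4 := by ring
      have hm3' : (1:ℝ) ≤ (N:ℝ)^3 := by nlinarith
      linarith [h5, hnpu, e2.ge, e2.le, h96, hm3, hm3', hp1.le]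
    calc (n:ℝ) ≤ ((N:ℝ) ^ 2 / 2) ^ 2 := h3
    _ ≤ ((n : ℝ) * p - i) ^ 2 := h2
    _ = ((i:ℝ) - n * p) ^ 2 := by ring
  · push_neg at hjk
    have hlow : Mf (k+1) ^ 2 ≤ i := le_trans (Nat.pow_le_pow_left (Mf_mono hjk) 2) hj1
    have hlow' : N ^ 8 ≤ i := by
      rw [Mf_succ, ← hNdef, ← pow_mul] at hlow
      exact hlow
    have hic : (N:ℝ) ^ 8 ≤ (i : ℝ) := by exact_mod_cast hlow'
    have hsq2 : 4 ≤ (N:ℝ) ^ 2 := by nlinarith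
    have hm4 : 16 ≤ (N:ℝ) ^ 4 := by nlinarith [hsq2, sq_nonneg ((N:ℝ)^2 - 4)]
    have h0 : 2 * (N:ℝ) ^ 2 + 1 ≤ (N:ℝ) ^ 4 := by nlinarith [sq_nonneg ((N:ℝ)^2 - 2)]
    have h8 : 16 * (N:ℝ) ^ 4 ≤ (N:ℝ) ^ 8 := by
      nlinarith [mul_nonneg (show (0:ℝ) ≤ (N:ℝ)^4 by positivity)
        (show (0:ℝ) ≤ (N:ℝ)^4 - 16 by linarith)]
    have h1 : (N:ℝ) ^ 4 ≤ (i : ℝ) - (n : ℝ) * p := by nlinarith [hnpu, hp1.le, hp0.le]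
    have h2 : ((N:ℝ) ^ 4) ^ 2 ≤ ((i:ℝ) - (n : ℝ) * p) ^ 2 :=
      pow_le_pow_left₀ (by positivity) h1 2
    have h96 : 96 * (N:ℝ) ^ 7 ≤ p * (N:ℝ) ^ 8 := by
      have := mul_le_mul_of_nonneg_right hpm (show (0:ℝ) ≤ (N:ℝ)^7 by positivity)
      linear_combination this
    have h7 : (N:ℝ) ^ 2 ≤ (N:ℝ) ^ 7 := by nlinarith [pow_le_pow_right₀ (show (1:ℝ) ≤ N by linarith) (show 2 ≤ 7 by norm_num)]
    have h71 : (1:ℝ) ≤ (N:ℝ) ^ 7 := one_le_pow₀ (by linarith)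
    have h3 : (n : ℝ) ≤ ((N:ℝ) ^ 4) ^ 2 := by
      by_contra hc
      push_neg at hc
      have h5 : p * (((N:ℝ) ^ 4) ^ 2) < p * n := mul_lt_mul_of_pos_left hc hp0
      have e2 : p * (((N:ℝ) ^ 4) ^ 2) = p * (N:ℝ)^8 := by ring
      linarith [h5, hnpu, e2.ge, e2.le, h96, h7, h71, hp1.le]
    linarith [h2, h3]


lemma aSeq_nonneg (n : ℕ) : 0 ≤ aSeq n := by
  rcases aSeq_01 n with h | h <;> rw [h] <;> norm_num

noncomputable def ind (j i : ℕ) : ℝ :=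
  if Mf j ^ 2 ≤ i ∧ i < Mf j ^ 2 + j * Mf j then 1 else 0

lemma ind_nonneg (j i : ℕ) : 0 ≤ ind j i := by
  unfold ind; split <;> norm_num

lemma ones_le {n : ℕ} (hn : 1 ≤ n) :
    ∑ i ∈ range (n + 1), aSeq i ≤ (Nat.log 4 n : ℝ) * (n : ℝ) ^ ((3:ℝ)/4) := by
  have hn0 : (0:ℝ) ≤ (n:ℝ) := Nat.cast_nonneg n
  have step1 : ∑ i ∈ range (n + 1), aSeq i
      ≤ ∑ i ∈ range (n + 1), ∑ j ∈ range (n + 1), ind j i := by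
    apply Finset.sum_le_sum
    intro i hi
    rcases aSeq_01 i with h | h
    · rw [h]
      exact Finset.sum_nonneg fun j _ => ind_nonneg j i
    · obtain ⟨j, hj1, hj2⟩ := aSeq_one_elim h
      have hji : j ≤ n := by
        have h1 := Mf_ge j
        have h2 : Mf j ≤ Mf j ^ 2 := Nat.le_self_pow (by norm_num) _
        have h3 : i ≤ n := by simpa [Nat.lt_succ_iff] using hi
        omega
      have hmem : j ∈ range (n + 1) := Finset.mem_range.mpr (by omega)
      have := Finset.single_le_sum (f := fun j => ind j i)
        (fun j _ => ind_nonneg j i) hmem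
      rw [h]
      have hind : ind j i = 1 := by unfold ind; rw [if_pos ⟨hj1, hj2⟩]
      linarith [this, hind.ge, hind.le]
  have step2 : ∑ i ∈ range (n + 1), ∑ j ∈ range (n + 1), ind j i
      = ∑ j ∈ range (n + 1), ∑ i ∈ range (n + 1), ind j i := Finset.sum_comm
  have step3 : ∀ j ∈ range (n + 1), ∑ i ∈ range (n + 1), ind j i
      ≤ (if 4 ^ (j + 1) ≤ n then (n : ℝ) ^ ((3:ℝ)/4) else 0) := by
    intro j _
    by_cases h4 : Mf j ^ 2 ≤ n
    · have h44 : 4 ^ (j + 1) ≤ n := le_trans (four_pow_le_Mf_sq j) h4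
      rw [if_pos h44]
      have hcard : ∑ i ∈ range (n + 1), ind j i
          = (((range (n + 1)).filter
              (fun i => Mf j ^ 2 ≤ i ∧ i < Mf j ^ 2 + j * Mf j)).card : ℝ) := by
        unfold ind
        rw [Finset.sum_boole]
      have hsub : (range (n + 1)).filter
            (fun i => Mf j ^ 2 ≤ i ∧ i < Mf j ^ 2 + j * Mf j)
          ⊆ Finset.Ico (Mf j ^ 2) (Mf j ^ 2 + j * Mf j) := by
        intro x hx
        rw [Finset.mem_filter] at hx
        exact Finset.mem_Ico.mpr hx.2
      have hcard2 : ((range (n + 1)).filter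
            (fun i => Mf j ^ 2 ≤ i ∧ i < Mf j ^ 2 + j * Mf j)).card ≤ j * Mf j := by
        have := Finset.card_le_card hsub
        simpa [Nat.card_Ico] using this
      have hbound : ((j * Mf j : ℕ) : ℝ) ≤ (n : ℝ) ^ ((3:ℝ)/4) := by
        have n1 : j ^ 4 ≤ Mf j ^ 2 := by
          calc j ^ 4 = (j ^ 2) ^ 2 := by ring
          _ ≤ (Mf j) ^ 2 := Nat.pow_le_pow_left (sq_le_Mf j) 2
        have n3 : (j * Mf j) ^ 4 ≤ n ^ 3 := by
          calc (j * Mf j) ^ 4 = j ^ 4 * Mf j ^ 4 := by ring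
          _ ≤ Mf j ^ 2 * Mf j ^ 4 := Nat.mul_le_mul_right _ n1
          _ = (Mf j ^ 2) ^ 3 := by ring
          _ ≤ n ^ 3 := Nat.pow_le_pow_left h4 3
        have n3R : ((j * Mf j : ℕ) : ℝ) ^ 4 ≤ (n : ℝ) ^ (3 : ℕ) := by exact_mod_cast n3
        have hr4 : ((n : ℝ) ^ ((3:ℝ)/4)) ^ (4 : ℕ) = (n : ℝ) ^ (3 : ℕ) := by
          rw [← Real.rpow_natCast ((n : ℝ) ^ ((3:ℝ)/4)) 4, ← Real.rpow_mul hn0,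
            show ((3:ℝ)/4 * ((4:ℕ):ℝ) : ℝ) = ((3:ℕ):ℝ) by norm_num, Real.rpow_natCast]
        refine le_of_pow_le_pow_left₀ (n := 4) (by norm_num) (by positivity) ?_
        rw [hr4]
        exact n3R
      calc ∑ i ∈ range (n + 1), ind j i
          = (((range (n + 1)).filter
              (fun i => Mf j ^ 2 ≤ i ∧ i < Mf j ^ 2 + j * Mf j)).card : ℝ) := hcard
      _ ≤ ((j * Mf j : ℕ) : ℝ) := by exact_mod_cast hcard2
      _ ≤ (n : ℝ) ^ ((3:ℝ)/4) := hbound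
    · have hz : ∑ i ∈ range (n + 1), ind j i = 0 := by
        apply Finset.sum_eq_zero
        intro i hi
        rw [Finset.mem_range, Nat.lt_succ_iff] at hi
        unfold ind
        rw [if_neg]
        rintro ⟨h1, -⟩
        exact h4 (le_trans h1 hi)
      rw [hz]
      split <;> positivity
  have step4 : ∑ j ∈ range (n + 1), (if 4 ^ (j + 1) ≤ n then (n : ℝ) ^ ((3:ℝ)/4) else 0)
      ≤ (Nat.log 4 n : ℝ) * (n : ℝ) ^ ((3:ℝ)/4) := by
    rw [← Finset.sum_filter, Finset.sum_const, nsmul_eq_mul]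
    apply mul_le_mul_of_nonneg_right _ (by positivity)
    have hsub : (range (n + 1)).filter (fun j => 4 ^ (j + 1) ≤ n) ⊆ range (Nat.log 4 n) := by
      intro j hj
      rw [Finset.mem_filter] at hj
      have := (Nat.le_log_iff_pow_le (by norm_num) (by omega)).mpr hj.2
      exact Finset.mem_range.mpr (by omega)
    have hcc := Finset.card_le_card hsub
    simp only [Finset.card_range] at hcc
    exact_mod_cast hcc
  calc ∑ i ∈ range (n + 1), aSeq i
      ≤ ∑ i ∈ range (n + 1), ∑ j ∈ range (n + 1), ind j i := step1
  _ = ∑ j ∈ range (n + 1), ∑ i ∈ range (n + 1), ind j i := step2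
  _ ≤ ∑ j ∈ range (n + 1), (if 4 ^ (j + 1) ≤ n then (n : ℝ) ^ ((3:ℝ)/4) else 0) :=
      Finset.sum_le_sum step3
  _ ≤ (Nat.log 4 n : ℝ) * (n : ℝ) ^ ((3:ℝ)/4) := step4

lemma cesaro_zero : Filter.Tendsto (cesaroMean aSeq) atTop (nhds 0) := by
  have hU : Tendsto (fun n : ℕ => Real.log n / (n:ℝ) ^ ((1:ℝ)/4)) atTop (nhds 0) :=
    ((isLittleO_log_rpow_atTop (by norm_num : (0:ℝ) < 1/4)).tendsto_div_nhds_zero).comp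
      tendsto_natCast_atTop_atTop
  apply tendsto_of_tendsto_of_tendsto_of_le_of_le' tendsto_const_nhds hU
  · exact Eventually.of_forall (fun n => by
      unfold cesaroMean
      exact mul_nonneg (by positivity) (Finset.sum_nonneg fun i _ => aSeq_nonneg i))
  · filter_upwards [eventually_ge_atTop 1] with n hn
    have hpos : (0:ℝ) < (n:ℝ) := by exact_mod_cast hn
    have h1R : (1:ℝ) ≤ (n:ℝ) := by exact_mod_cast hn
    have hlogn : 0 ≤ Real.log n := Real.log_nonneg h1R
    have hX : (0:ℝ) ≤ (n:ℝ) ^ ((3:ℝ)/4) := by positivity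
    have hlog4 : 1 ≤ Real.log 4 := by
      rw [show (1:ℝ) = Real.log (Real.exp 1) from (Real.log_exp 1).symm]
      exact Real.log_le_log (Real.exp_pos 1) (by linarith [Real.exp_one_lt_d9])
    have hlog : (Nat.log 4 n : ℝ) ≤ Real.log n := by
      refine le_trans (Real.natLog_le_logb n 4) ?_
      rw [Real.logb]
      simpa using div_le_self hlogn hlog4
    have hsum := ones_le hn
    have stepa : cesaroMean aSeq n ≤ (1/((n:ℝ)+1)) * (Real.log n * (n:ℝ) ^ ((3:ℝ)/4)) := by
      unfold cesaroMean
      push_cast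
      exact mul_le_mul_of_nonneg_left
        (hsum.trans (mul_le_mul_of_nonneg_right hlog hX)) (by positivity)
    have stepb : (1/((n:ℝ)+1)) * (Real.log n * (n:ℝ) ^ ((3:ℝ)/4))
        ≤ (1/(n:ℝ)) * (Real.log n * (n:ℝ) ^ ((3:ℝ)/4)) :=
      mul_le_mul_of_nonneg_right
        (one_div_le_one_div_of_le hpos (by linarith)) (mul_nonneg hlogn hX)
    have stepc : (1/(n:ℝ)) * (Real.log n * (n:ℝ) ^ ((3:ℝ)/4))
        = Real.log n / (n:ℝ) ^ ((1:ℝ)/4) := by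
      have hr : (n:ℝ) ^ ((3:ℝ)/4) * (n:ℝ) ^ ((1:ℝ)/4) = (n:ℝ) := by
        rw [← Real.rpow_add hpos]
        norm_num
      have hne : ((n:ℝ) ^ ((1:ℝ)/4)) ≠ 0 := by positivity
      field_simp
      linear_combination Real.log n * hr
    calc cesaroMean aSeq n ≤ _ := stepa
    _ ≤ _ := stepb
    _ = _ := stepc


theorem exists_zero_one_seq_cesaro_tendsto_zero_binMean_diverges :
    ∃ a : ℕ → ℝ, (∀ n, a n = 0 ∨ a n = 1) ∧
      Tendsto (cesaroMean a) atTop (nhds 0) ∧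
      ∀ p : ℝ, 0 < p → p < 1 → ¬ ∃ l : ℝ, Tendsto (binMean p a) atTop (nhds l) := by
  refine ⟨aSeq, aSeq_01, cesaro_zero, ?_⟩
  rintro p hp0 hp1 ⟨l, hl⟩
  have hk48 : ∀ N0 : ℕ, 48 ≤ ((max N0 (Nat.ceil ((48:ℝ)/p)) : ℕ) : ℝ) * p := by
    intro N0
    have h1 : (48:ℝ)/p ≤ (Nat.ceil ((48:ℝ)/p) : ℝ) := Nat.le_ceil _
    have h2 : ((Nat.ceil ((48:ℝ)/p) : ℕ) : ℝ) ≤ ((max N0 (Nat.ceil ((48:ℝ)/p)) : ℕ) : ℝ) := by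
      exact_mod_cast le_max_right N0 (Nat.ceil ((48:ℝ)/p))
    calc (48:ℝ) = (48/p) * p := by field_simp
    _ ≤ ((max N0 (Nat.ceil ((48:ℝ)/p)) : ℕ) : ℝ) * p :=
      mul_le_mul_of_nonneg_right (h1.trans h2) hp0.le
  obtain ⟨N, hN⟩ := (Metric.tendsto_atTop.mp hl) (1/8) (by norm_num)
  obtain ⟨n1, hkn1, h1n1, hcond1⟩ := partA hp0 hp1 (hk48 N)
  obtain ⟨n2, hkn2, h1n2, hcond2⟩ := partB hp0 hp1 (hk48 N)
  have hn1N : N ≤ n1 := le_trans (le_max_left _ _) hkn1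
  have hn2N : N ≤ n2 := le_trans (le_max_left _ _) hkn2
  have hb1 : 3/4 ≤ binMean p aSeq n1 :=
    binMean_ge_three_quarter hp0 hp1 aSeq_01 h1n1 hcond1
  have hb2 : binMean p aSeq n2 ≤ 1/4 :=
    binMean_le_quarter hp0 hp1 aSeq_01 h1n2 hcond2
  have d1 := hN n1 hn1N
  have d2 := hN n2 hn2N
  rw [Real.dist_eq] at d1 d2
  have a1 := abs_lt.mp d1
  have a2 := abs_lt.mp d2
  linarith [a1.1, a1.2, a2.1, a2.2]
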